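/- Define Q(x₁,…,x₅) = x₁(1-x₁)·x₂(1-x₂)·x₃(1-x₃)·x₄(1-x₄)·x₅(1-x₅)/(1-x₁x₂x₃x₄x₅) for x ∈ [0,1]⁵ (with Q = 0 at (1,1,1,1,1)). Then sup over [0,1]⁵ of |Q| is at most (0.51)⁵·(0.495)⁵/(1-(0.51)⁵). -/

import Mathlib

open Finset

lemma amgm5 (a : Fin 5 → ℝ) (ha : ∀ i, 0 ≤ a i) :
    ∏ i, a i ≤ ((∑ i, a i) / 5) ^ 5 := by
  have h := Real.geom_mean_le_arith_mean_weighted Finset.univ (fun _ => (1:ℝ)/5) a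
    (fun i _ => by norm_num) (by simp) (fun i _ => ha i)
  have hprod : ∏ i, a i = (∏ i, a i ^ ((1:ℝ)/5)) ^ (5:ℕ) := by
    rw [← Finset.prod_pow]
    refine Finset.prod_congr rfl fun i _ => ?_
    rw [← Real.rpow_natCast (a i ^ ((1:ℝ)/5)) 5, ← Real.rpow_mul (ha i)]
    norm_num
  rw [hprod]
  have h2 : (∑ i, (1:ℝ)/5 * a i) = (∑ i, a i) / 5 := by
    rw [Finset.sum_div]; exact Finset.sum_congr rfl fun i _ => by ring
  refine pow_le_pow_left₀ (Finset.prod_nonneg fun i _ => Real.rpow_nonneg (ha i) _) ?_ 5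
  calc ∏ i, a i ^ ((1:ℝ)/5) ≤ ∑ i, (1:ℝ)/5 * a i := h
    _ = (∑ i, a i)/5 := h2

lemma key5 (s : ℝ) (h0 : 0 ≤ s) (h1 : s ≤ 1) :
    s^5 * (1-s)^5 ≤ (0.51:ℝ)^5 * (0.495:ℝ)^5 / (1 - (0.51:ℝ)^5) * (1 - s^5) := by
  have hC : (0:ℝ) < 1 - (0.51:ℝ)^5 := by norm_num
  have h1' : (0:ℝ) ≤ 1 - s := by linarith
  rw [div_mul_eq_mul_div, le_div_iff₀ hC]
  nlinarith [sq_nonneg (s - 1/2),  mul_nonneg h0 h1', sq_nonneg s, sq_nonneg (s*(1-s)), sq_nonneg (s^2*(1-s)), sq_nonneg (s*(1-s)^2), mul_nonneg (mul_nonneg h0 h0) h1', sq_nonneg (s^2 - s/2), sq_nonneg (s^2*(s-1/2)), sq_nonneg (s*(s-1/2)), mul_nonneg (pow_nonneg h0 3) (sq_nonneg (s-1/2)), mul_nonneg (pow_nonneg h0 4) (sq_nonneg (s-1/2)), mul_nonneg (pow_nonneg h0 5) (sq_nonneg (s-1/2)), mul_nonneg (mul_nonneg (pow_nonneg h0 3)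 h1') (sq_nonneg (s-1/2))]

theorem Q_sup_bound :
    ∀ x ∈ Set.univ.pi fun _ : Fin 5 => Set.Icc (0:ℝ) 1,
      |(∏ i, x i * (1 - x i)) / (1 - ∏ i, x i)| ≤
        (0.51 : ℝ) ^ 5 * (0.495 : ℝ) ^ 5 / (1 - (0.51 : ℝ) ^ 5) := by
  intro x hx
  have h0 : ∀ i, 0 ≤ x i := fun i => (hx i trivial).1
  have h1 : ∀ i, x i ≤ 1 := fun i => (hx i trivial).2
  set C : ℝ := (0.51 : ℝ) ^ 5 * (0.495 : ℝ) ^ 5 / (1 - (0.51 : ℝ) ^ 5) with hCdef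
  have hCpos : 0 < C := by rw [hCdef]; positivity
  set p : ℝ := ∏ i, x i with hp
  set q : ℝ := ∏ i, (1 - x i) with hq
  have hNpq : (∏ i, x i * (1 - x i)) = p * q := Finset.prod_mul_distrib
  have hp0 : 0 ≤ p := Finset.prod_nonneg fun i _ => h0 i
  have hq0 : 0 ≤ q := Finset.prod_nonneg fun i _ => by linarith [h1 i]
  have hp1 : p ≤ 1 := Finset.prod_le_one (fun i _ => h0 i) (fun i _ => h1 i)
  set s : ℝ := (∑ i, x i) / 5 with hs
  have hs0 : 0 ≤ s := by
    apply div_nonneg _ (by norm_num)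
    exact Finset.sum_nonneg fun i _ => h0 i
  have hs1 : s ≤ 1 := by
    rw [hs, div_le_one (by norm_num)]
    calc (∑ i, x i) ≤ ∑ _i : Fin 5, (1:ℝ) := Finset.sum_le_sum fun i _ => h1 i
      _ = 5 := by simp
  have hA : p ≤ s ^ 5 := amgm5 x h0
  have hB : q ≤ (1 - s) ^ 5 := by
    have := amgm5 (fun i => 1 - x i) (fun i => by linarith [h1 i])
    have hsum : (∑ i, (1 - x i)) / 5 = 1 - s := by
      rw [Finset.sum_sub_distrib]
      simp [hs]
      ring
    rwa [hsum] at this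
  by_cases hple : p = 1
  · rw [hple]
    simp [hCpos.le]
  · have hplt : p < 1 := lt_of_le_of_ne hp1 hple
    have hd : 0 < 1 - p := by linarith
    rw [hNpq, abs_of_nonneg (div_nonneg (mul_nonneg hp0 hq0) hd.le), div_le_iff₀ hd]
    have step1 : p * q ≤ s ^ 5 * (1 - s) ^ 5 :=
      mul_le_mul hA hB hq0 (pow_nonneg hs0 5)
    have step2 : s ^ 5 * (1 - s) ^ 5 ≤ C * (1 - s ^ 5) := key5 s hs0 hs1
    have step3 : C * (1 - s ^ 5) ≤ C * (1 - p) := by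
      apply mul_le_mul_of_nonneg_left _ hCpos.le
      linarith
    linarith
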